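/- For every q > 1, every constant C > 0 and every α ∈ (0,1), the series Σ_{i=1}^∞ i^{−q} · exp( −C · Φ⁻¹( α·i^{−q}/ζ(q) ) ) · log i converges (is finite). -/

import Mathlib

open MeasureTheory ProbabilityTheory

/-- The standard normal CDF `Φ`. -/
noncomputable def stdNormalCDF (x : ℝ) : ℝ :=
  (ProbabilityTheory.gaussianReal 0 1 (Set.Iic x)).toReal

/-- The inverse `Φ⁻¹` of the standard normal CDF (on `(0,1)`). -/
noncomputable def stdNormalQuantile : ℝ → ℝ :=
  Function.invFun stdNormalCDF

/-- The (real) Riemann zeta function `ζ(q) = ∑_{i=1}^∞ i^{-q}`. -/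
noncomputable def zetaReal (q : ℝ) : ℝ :=
  ∑' i : ℕ, ((i : ℝ) + 1) ^ (-q)

lemma stdNormalCDF_eq_integral (x : ℝ) :
    stdNormalCDF x = ∫ t in Set.Iic x, gaussianPDFReal 0 1 t := by
  rw [stdNormalCDF, gaussianReal_apply_eq_integral 0 one_ne_zero,
    ENNReal.toReal_ofReal (integral_nonneg fun t => gaussianPDFReal_nonneg 0 1 t)]

lemma stdNormalCDF_eq_add (x : ℝ) :
    stdNormalCDF x = stdNormalCDF 0 + ∫ t in (0:ℝ)..x, gaussianPDFReal 0 1 t := by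
  have hint := integrable_gaussianPDFReal 0 1
  have h := intervalIntegral.integral_Iic_sub_Iic (f := gaussianPDFReal 0 1)
    (a := (0:ℝ)) (b := x) hint.integrableOn hint.integrableOn
  rw [stdNormalCDF_eq_integral, stdNormalCDF_eq_integral]
  linarith

lemma continuous_stdNormalCDF : Continuous stdNormalCDF := by
  have hint := integrable_gaussianPDFReal 0 1
  have : stdNormalCDF = fun x => stdNormalCDF 0 + ∫ t in (0:ℝ)..x, gaussianPDFReal 0 1 t :=
    funext stdNormalCDF_eq_add
  rw [this]
  exact continuous_const.add (hint.continuous_primitive 0)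

lemma strictMono_stdNormalCDF : StrictMono stdNormalCDF := by
  intro a b hab
  have hint := integrable_gaussianPDFReal 0 1
  have h := intervalIntegral.integral_Iic_sub_Iic (f := gaussianPDFReal 0 1)
    (a := a) (b := b) hint.integrableOn hint.integrableOn
  have hpos : 0 < ∫ t in a..b, gaussianPDFReal 0 1 t :=
    intervalIntegral.intervalIntegral_pos_of_pos_on hint.intervalIntegrable
      (fun x _ => gaussianPDFReal_pos 0 1 x one_ne_zero) hab
  rw [stdNormalCDF_eq_integral, stdNormalCDF_eq_integral]
  linarith

lemma stdNormalCDF_eq_cdf : stdNormalCDF = fun x => ProbabilityTheory.cdf (gaussianReal 0 1) x := by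
  funext x
  rw [ProbabilityTheory.cdf_eq_real]
  rfl

lemma stdNormalCDF_quantile_eq {t : ℝ} (ht : t ∈ Set.Ioo (0:ℝ) 1) :
    stdNormalCDF (stdNormalQuantile t) = t := by
  have h1 : Filter.Tendsto stdNormalCDF Filter.atBot (nhds 0) := by
    rw [stdNormalCDF_eq_cdf]; exact ProbabilityTheory.tendsto_cdf_atBot _
  have h2 : Filter.Tendsto stdNormalCDF Filter.atTop (nhds 1) := by
    rw [stdNormalCDF_eq_cdf]; exact ProbabilityTheory.tendsto_cdf_atTop _
  obtain ⟨a, ha⟩ := (h1.eventually (gt_mem_nhds ht.1)).exists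
  obtain ⟨b, hb⟩ := (h2.eventually (lt_mem_nhds ht.2)).exists
  have hab : a ≤ b := (strictMono_stdNormalCDF.lt_iff_lt.mp (ha.trans hb)).le
  obtain ⟨x, -, hx⟩ := intermediate_value_Icc hab continuous_stdNormalCDF.continuousOn
    ⟨ha.le, hb.le⟩
  exact Function.invFun_eq ⟨x, hx⟩

lemma stdNormalCDF_neg_le {y : ℝ} (hy : 0 ≤ y) :
    stdNormalCDF (-y) ≤ Real.exp (-y^2/2) := by
  rw [stdNormalCDF_eq_integral]
  set g : ℝ → ℝ := fun t => Real.exp (-y^2/2) * gaussianPDFReal (-y) 1 t with hg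
  have hpt : ∀ t : ℝ, Real.exp (-(y*t) - y^2) * gaussianPDFReal 0 1 t = g t := by
    intro t
    simp only [hg, gaussianPDFReal]
    push_cast
    rw [mul_left_comm, mul_left_comm (Real.exp (-y^2/2)), ← Real.exp_add, ← Real.exp_add]
    congr 1
    rw [Real.exp_eq_exp]
    ring
  have hg_int : Integrable g := (integrable_gaussianPDFReal (-y) 1).const_mul _
  have hg_nonneg : ∀ t, 0 ≤ g t := fun t =>
    mul_nonneg (Real.exp_nonneg _) (gaussianPDFReal_nonneg _ _ _)
  have h1 : ∫ t in Set.Iic (-y), gaussianPDFReal 0 1 t ≤ ∫ t in Set.Iic (-y), g t := by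
    refine setIntegral_mono_on (integrable_gaussianPDFReal 0 1).integrableOn
      hg_int.integrableOn measurableSet_Iic (fun t ht => ?_)
    rw [← hpt t]
    nth_rewrite 1 [show gaussianPDFReal 0 1 t = 1 * gaussianPDFReal 0 1 t by ring]
    refine mul_le_mul_of_nonneg_right ?_ (gaussianPDFReal_nonneg _ _ _)
    rw [show (1:ℝ) = Real.exp 0 by simp]
    apply Real.exp_le_exp.mpr
    simp only [Set.mem_Iic] at ht
    nlinarith
  have h2 : ∫ t in Set.Iic (-y), g t ≤ ∫ t, g t :=
    setIntegral_le_integral hg_int (Filter.Eventually.of_forall hg_nonneg)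
  have h3 : ∫ t, g t = Real.exp (-y^2/2) := by
    rw [hg, MeasureTheory.integral_const_mul, integral_gaussianPDFReal_eq_one _ one_ne_zero,
      mul_one]
  linarith

lemma neg_le_stdNormalQuantile {t y : ℝ} (ht : t ∈ Set.Ioo (0:ℝ) 1) (hy : 0 ≤ y)
    (h : Real.exp (-y^2/2) ≤ t) : -y ≤ stdNormalQuantile t := by
  by_contra hlt
  push_neg at hlt
  have h2 := strictMono_stdNormalCDF hlt
  rw [stdNormalCDF_quantile_eq ht] at h2
  have h3 := stdNormalCDF_neg_le hy
  linarith

/-- For every `q > 1`, `C > 0` and `α ∈ (0,1)`, the series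
`∑_{i=1}^∞ i^{-q} · exp(−C·Φ⁻¹(α i^{-q}/ζ(q))) · log i` converges. -/
theorem summable_q_series_exp_quantile_log
    (q C α : ℝ) (hq : 1 < q) (hC : 0 < C) (hα : α ∈ Set.Ioo (0 : ℝ) 1) :
    Summable (fun i : ℕ =>
      ((i : ℝ) + 1) ^ (-q) *
        Real.exp (-C * stdNormalQuantile (α * ((i : ℝ) + 1) ^ (-q) / zetaReal q)) *
        Real.log ((i : ℝ) + 1)) := by
  obtain ⟨hα0, hα1⟩ := hα
  have hsum : ∀ r : ℝ, r < -1 → Summable (fun i : ℕ => ((i:ℝ)+1) ^ r) := by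
    intro r hr
    have h := Real.summable_nat_rpow.mpr hr
    have h2 := (summable_nat_add_iff 1).mpr h
    exact h2.congr fun n => by push_cast; rfl
  have hzs : Summable (fun i : ℕ => ((i:ℝ)+1) ^ (-q)) := hsum (-q) (by linarith)
  set z := zetaReal q with hzdef
  have hz1 : (1:ℝ) ≤ z := by
    have h0 := Summable.le_tsum hzs 0 (fun j _ => Real.rpow_nonneg (by positivity) _)
    simpa [hzdef, zetaReal] using h0
  have hz0 : (0:ℝ) < z := lt_of_lt_of_le one_pos hz1
  set ε : ℝ := (q-1)/(4*q) with hεdef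
  have hε : 0 < ε := by
    apply div_pos <;> linarith
  set A : ℝ := Real.log z - Real.log α with hAdef
  have hA : 0 ≤ A := by
    have h1 := Real.log_nonneg hz1
    have h2 := Real.log_nonpos hα0.le hα1.le
    rw [hAdef]; linarith
  set K1 : ℝ := Real.exp (C^2/(2*ε)) * Real.exp (ε*A) with hK1def
  set K : ℝ := K1 / (ε * q) with hKdef
  have key : ∀ i : ℕ,
      ((i:ℝ)+1) ^ (-q) * Real.exp (-C * stdNormalQuantile (α * ((i:ℝ)+1) ^ (-q) / z)) *
        Real.log ((i:ℝ)+1) ≤ K * ((i:ℝ)+1) ^ (-(q+1)/2) := by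
    intro i
    set x : ℝ := (i:ℝ)+1 with hx
    have hx1 : (1:ℝ) ≤ x := by
      have := Nat.cast_nonneg (α := ℝ) i
      rw [hx]; linarith
    have hx0 : (0:ℝ) < x := lt_of_lt_of_le one_pos hx1
    set p : ℝ := x ^ (-q) with hp
    have hp0 : 0 < p := Real.rpow_pos_of_pos hx0 _
    have hp1 : p ≤ 1 := Real.rpow_le_one_of_one_le_of_nonpos hx1 (by linarith)
    set t : ℝ := α * p / z with htdef
    have ht : t ∈ Set.Ioo (0:ℝ) 1 := by
      constructor
      · positivity
      · rw [htdef, div_lt_one hz0]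
        nlinarith
    set L : ℝ := A + q * Real.log x with hL
    have hlogx : 0 ≤ Real.log x := Real.log_nonneg hx1
    have hL0 : 0 ≤ L := by
      rw [hL]; nlinarith
    have hlogt : Real.log t = -L := by
      rw [htdef, Real.log_div (by positivity) (ne_of_gt hz0),
        Real.log_mul (ne_of_gt hα0) (ne_of_gt hp0), hp, Real.log_rpow hx0, hL, hAdef]
      ring
    set y : ℝ := Real.sqrt (2 * L) with hy
    have hy0 : 0 ≤ y := Real.sqrt_nonneg _
    have hy2 : y^2 = 2*L := Real.sq_sqrt (by linarith)
    have htail : Real.exp (-y^2/2) ≤ t := by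
      rw [hy2, show -(2*L)/2 = -L by ring, ← hlogt, Real.exp_log ht.1]
    have hquant : -y ≤ stdNormalQuantile t := neg_le_stdNormalQuantile ht hy0 htail
    have hAM : C * y ≤ ε * L + C^2/(2*ε) := by
      have h5 : ε * L = ε * y^2 / 2 := by rw [hy2]; ring
      rw [h5, ← sub_nonneg]
      have h4 : ε * y^2/2 + C^2/(2*ε) - C*y = (ε*y - C)^2/(2*ε) := by
        field_simp
        ring
      rw [h4]
      positivity
    have hE : Real.exp (-C * stdNormalQuantile t) ≤ K1 * x ^ (ε*q) := by
      have h6 : -C * stdNormalQuantile t ≤ C * y := by nlinarith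
      calc Real.exp (-C * stdNormalQuantile t) ≤ Real.exp (ε*L + C^2/(2*ε)) :=
            Real.exp_le_exp.mpr (h6.trans hAM)
        _ = K1 * x ^ (ε*q) := by
            rw [hK1def, hL, Real.rpow_def_of_pos hx0, ← Real.exp_add, ← Real.exp_add]
            congr 1
            ring
    have hlog : Real.log x ≤ x ^ (ε*q) / (ε*q) :=
      Real.log_le_rpow_div hx0.le (by positivity)
    have hεq : 0 < ε * q := by positivity
    have hterm : p * Real.exp (-C * stdNormalQuantile t) * Real.log x
        ≤ p * (K1 * x ^ (ε*q)) * (x ^ (ε*q) / (ε*q)) := by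
      refine mul_le_mul (mul_le_mul_of_nonneg_left hE hp0.le) hlog hlogx ?_
      positivity
    refine hterm.trans (le_of_eq ?_)
    have hxpow : p * x ^ (ε*q) * x ^ (ε*q) = x ^ (-(q+1)/2) := by
      rw [hp, ← Real.rpow_add hx0, ← Real.rpow_add hx0]
      congr 1
      rw [hεdef]
      field_simp
      ring
    calc p * (K1 * x ^ (ε*q)) * (x ^ (ε*q) / (ε*q))
        = (K1 / (ε*q)) * (p * x ^ (ε*q) * x ^ (ε*q)) := by ring
      _ = K * x ^ (-(q+1)/2) := by rw [hxpow, hKdef]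
  refine Summable.of_nonneg_of_le (fun i => ?_) key
    ((hsum (-(q+1)/2) (by linarith)).mul_left K)
  have h1 : (1:ℝ) ≤ (i:ℝ)+1 := by
    have := Nat.cast_nonneg (α := ℝ) i
    linarith
  exact mul_nonneg (mul_nonneg (Real.rpow_nonneg (by linarith) _) (Real.exp_nonneg _))
    (Real.log_nonneg h1)
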